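/- Let {φ_t} be a Markov chain on a finite state space S with optimal set S_opt, let d: S → ℝ≥0 be a drift function with d(x) = 0 for x ∈ S_opt, and let G(x) denote the expected hitting time of S_opt from x, assumed finite. If for every non-optimal point x the one-step drift Δ(x) := Σ_{y ∈ S} P(x,y)(d(x) − d(y)) satisfies Δ(x) ≤ 1, then G(x) ≥ d(x) for all x ∈ S. -/

import Mathlib

/-- Drift analysis lower bound: if the one-step drift with respect to a drift
function `d` (nonnegative, zero on the optimal set) is at most 1 at every
non-optimal point, then the expected hitting time `G` of the optimal set
satisfies `G x ≥ d x` everywhere.  `G` is characterized as the (finite)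
expected first hitting time of `opt`: nonnegative, vanishing on `opt`, and
satisfying the one-step recurrence off `opt`. -/
theorem stmt1 {S : Type*} [Fintype S]
    (P : S → S → ℝ) (opt : Set S) (d G : S → ℝ)
    (hP0 : ∀ x y, 0 ≤ P x y) (hP1 : ∀ x, ∑ y, P x y = 1)
    (hd0 : ∀ x, 0 ≤ d x) (hdopt : ∀ x ∈ opt, d x = 0)
    (hG0 : ∀ x, 0 ≤ G x) (hGopt : ∀ x ∈ opt, G x = 0)
    (hGrec : ∀ x ∉ opt, G x = 1 + ∑ y, P x y * G y)
    (hdrift : ∀ x ∉ opt, ∑ y, P x y * (d x - d y) ≤ 1) :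
    ∀ x, d x ≤ G x := by
  classical
  intro x
  by_contra hx
  push_neg at hx
  set f : S → ℝ := fun z => G z - d z with hf
  -- key superharmonicity off opt
  have key : ∀ z ∉ opt, ∑ y, P z y * f y ≤ f z := by
    intro z hz
    have h1 : G z = 1 + ∑ y, P z y * G y := hGrec z hz
    have h2 : ∑ y, P z y * (d z - d y) ≤ 1 := hdrift z hz
    have h3 : ∑ y, P z y * (d z - d y) = d z - ∑ y, P z y * d y := by
      simp_rw [mul_sub]
      rw [Finset.sum_sub_distrib, ← Finset.sum_mul, hP1 z, one_mul]
    have h4 : d z ≤ 1 + ∑ y, P z y * d y := by linarith [h3 ▸ h2]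
    have h5 : ∑ y, P z y * f y = (∑ y, P z y * G y) - ∑ y, P z y * d y := by
      simp_rw [hf, mul_sub, Finset.sum_sub_distrib]
    simp only [hf]
    linarith
  -- f is negative somewhere
  have hxneg : f x < 0 := by simp [hf]; linarith
  -- minimizer of f
  obtain ⟨x0, -, hx0min⟩ :=
    Finset.exists_min_image Finset.univ f ⟨x, Finset.mem_univ x⟩
  have hx0min' : ∀ y, f x0 ≤ f y := fun y => hx0min y (Finset.mem_univ y)
  set m : ℝ := f x0 with hm
  have hmneg : m < 0 := lt_of_le_of_lt (hx0min' x) hxneg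
  have hfopt : ∀ z ∈ opt, f z = 0 := by
    intro z hz; simp [hf, hGopt z hz, hdopt z hz]
  -- closure of the level set
  have hclosed : ∀ z, f z = m → ∀ y, P z y ≠ 0 → f y = m := by
    intro z hzm y hPy
    have hznopt : z ∉ opt := by
      intro hz; rw [hfopt z hz] at hzm; linarith
    have hsum : ∑ y, P z y * (f y - m) ≤ 0 := by
      have := key z hznopt
      have h6 : ∑ y, P z y * (f y - m) = (∑ y, P z y * f y) - m := by
        simp_rw [mul_sub, Finset.sum_sub_distrib, ← Finset.sum_mul, hP1 z, one_mul]
      linarith [hzm ▸ this]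
    have hnonneg : ∀ y ∈ Finset.univ, 0 ≤ P z y * (f y - m) := by
      intro y _
      exact mul_nonneg (hP0 z y) (by linarith [hx0min' y])
    have hzero : ∀ y ∈ Finset.univ, P z y * (f y - m) = 0 := by
      rw [← Finset.sum_eq_zero_iff_of_nonneg hnonneg]
      exact le_antisymm hsum (Finset.sum_nonneg hnonneg)
    have := hzero y (Finset.mem_univ y)
    rcases mul_eq_zero.mp this with h | h
    · exact absurd h hPy
    · linarith
  -- minimizer of G over the level set
  set A : Finset S := Finset.univ.filter (fun z => f z = m) with hA
  have hx0A : x0 ∈ A := by simp [hA, hm]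
  obtain ⟨z, hzA, hzmin⟩ := Finset.exists_min_image A G ⟨x0, hx0A⟩
  have hzm : f z = m := (Finset.mem_filter.mp hzA).2
  have hznopt : z ∉ opt := by
    intro hz; rw [hfopt z hz] at hzm; linarith
  have hge : G z ≤ ∑ y, P z y * G y := by
    calc G z = ∑ y, P z y * G z := by rw [← Finset.sum_mul, hP1 z, one_mul]
    _ ≤ ∑ y, P z y * G y := by
        apply Finset.sum_le_sum
        intro y _
        by_cases hPy : P z y = 0
        · simp [hPy]
        · apply mul_le_mul_of_nonneg_left _ (hP0 z y)
          have hyA : y ∈ A := by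
            simp [hA]; exact hclosed z hzm y hPy
          exact hzmin y hyA
  have := hGrec z hznopt
  linarith
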